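/- arXiv:2005.08434 — 2 statements merged into one kernel-verified Lean document; each statement's English description precedes it below -/
import Mathlib

section
/- Let (σ_n)_{n≥0} be a nonincreasing sequence of nonnegative reals, s > 0, and σ ≥ σ_0. If (1/2)∑_{i=1}^n log(1 + s⁻² σ_{i-1}²) ≤ γ_n for all n, then σ_n² ≤ (2σ²/log(1 + s⁻²σ²)) · (γ_n / n) for all n ≥ 1. -/
open Finset

lemma key_log_ineq {c x : ℝ} (hc : 0 < c) (hx : 0 ≤ x) (hxc : x ≤ c) :
    x * Real.log (1 + c) ≤ c * Real.log (1 + x) := by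
  have h1 : (1 : ℝ) ∈ Set.Ioi (0 : ℝ) := by norm_num
  have h2 : (1 + c) ∈ Set.Ioi (0 : ℝ) := by simp; linarith
  have ha : 0 ≤ 1 - x / c := by
    have : x / c ≤ 1 := (div_le_one hc).mpr hxc
    linarith
  have hb : 0 ≤ x / c := div_nonneg hx hc.le
  have hab : (1 - x / c) + x / c = 1 := by ring
  have := (strictConcaveOn_log_Ioi.concaveOn).2 h1 h2 ha hb hab
  simp only [smul_eq_mul, Real.log_one, mul_zero] at this
  have heq : (1 - x / c) * 1 + x / c * (1 + c) = 1 + x := by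
    field_simp
    ring
  rw [heq] at this
  have : x / c * Real.log (1 + c) ≤ Real.log (1 + x) := by linarith
  calc x * Real.log (1 + c) = c * (x / c * Real.log (1 + c)) := by
        field_simp
    _ ≤ c * Real.log (1 + x) := by
        exact mul_le_mul_of_nonneg_left this hc.le

/-- Uncertainty reduction: if `(σ_n)` is nonincreasing and nonnegative, `s > 0`,
`σ ≥ σ_0`, and the greedy mutual information sum is bounded by `γ_n`, then
`σ_n² ≤ (2σ²/log(1 + s⁻²σ²)) · (γ_n / n)` for all `n ≥ 1`. -/
theorem uncertainty_reduction (σseq : ℕ → ℝ) (s σ : ℝ) (γ : ℕ → ℝ)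
    (hs : 0 < s) (hσ : σseq 0 ≤ σ) (hσ0 : 0 < σ)
    (hnonneg : ∀ n, 0 ≤ σseq n) (hanti : ∀ n, σseq (n + 1) ≤ σseq n)
    (hMI : ∀ n : ℕ,
      (1 / 2) * ∑ i ∈ range n, Real.log (1 + s⁻¹ ^ 2 * σseq i ^ 2) ≤ γ n) :
    ∀ n : ℕ, 1 ≤ n →
      σseq n ^ 2 ≤ 2 * σ ^ 2 / Real.log (1 + s⁻¹ ^ 2 * σ ^ 2) * (γ n / n) := by
  intro n hn
  have hs2 : 0 < s⁻¹ ^ 2 := by positivity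
  set c : ℝ := s⁻¹ ^ 2 * σ ^ 2 with hc_def
  have hc : 0 < c := by positivity
  set L : ℝ := Real.log (1 + c) with hL_def
  have hL : 0 < L := Real.log_pos (by linarith)
  have hmono : Antitone σseq := antitone_nat_of_succ_le hanti
  have hbound : ∀ i, σseq i ≤ σ := fun i => le_trans (hmono (Nat.zero_le i)) hσ
  -- each term
  have hterm : ∀ i, s⁻¹ ^ 2 * σseq i ^ 2 * L ≤ c * Real.log (1 + s⁻¹ ^ 2 * σseq i ^ 2) := by
    intro i
    apply key_log_ineq hc (by positivity)
    have : σseq i ^ 2 ≤ σ ^ 2 := pow_le_pow_left₀ (hnonneg i) (hbound i) 2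
    exact mul_le_mul_of_nonneg_left this hs2.le
  have hstep : ∀ i < n, s⁻¹ ^ 2 * σseq n ^ 2 * L ≤ s⁻¹ ^ 2 * σseq i ^ 2 * L := by
    intro i hi
    have : σseq n ^ 2 ≤ σseq i ^ 2 :=
      pow_le_pow_left₀ (hnonneg n) (hmono hi.le) 2
    exact mul_le_mul_of_nonneg_right (mul_le_mul_of_nonneg_left this hs2.le) hL.le
  have hsum : (n : ℝ) * (s⁻¹ ^ 2 * σseq n ^ 2 * L)
      ≤ c * ∑ i ∈ range n, Real.log (1 + s⁻¹ ^ 2 * σseq i ^ 2) := by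
    calc (n : ℝ) * (s⁻¹ ^ 2 * σseq n ^ 2 * L)
        = ∑ _i ∈ range n, s⁻¹ ^ 2 * σseq n ^ 2 * L := by
          rw [Finset.sum_const, card_range, nsmul_eq_mul]
      _ ≤ ∑ i ∈ range n, s⁻¹ ^ 2 * σseq i ^ 2 * L :=
          Finset.sum_le_sum (fun i hi => hstep i (mem_range.mp hi))
      _ ≤ ∑ i ∈ range n, c * Real.log (1 + s⁻¹ ^ 2 * σseq i ^ 2) :=
          Finset.sum_le_sum (fun i _ => hterm i)
      _ = c * ∑ i ∈ range n, Real.log (1 + s⁻¹ ^ 2 * σseq i ^ 2) := by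
          rw [Finset.mul_sum]
  have hMI' : ∑ i ∈ range n, Real.log (1 + s⁻¹ ^ 2 * σseq i ^ 2) ≤ 2 * γ n := by
    have := hMI n
    linarith
  have hfinal : (n : ℝ) * (s⁻¹ ^ 2 * σseq n ^ 2 * L) ≤ c * (2 * γ n) := by
    calc (n : ℝ) * (s⁻¹ ^ 2 * σseq n ^ 2 * L)
        ≤ c * ∑ i ∈ range n, Real.log (1 + s⁻¹ ^ 2 * σseq i ^ 2) := hsum
      _ ≤ c * (2 * γ n) := mul_le_mul_of_nonneg_left hMI' hc.le
  have hn' : (0 : ℝ) < n := by exact_mod_cast hn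
  rw [div_mul_eq_mul_div, le_div_iff₀ hL, mul_div_assoc', le_div_iff₀ hn']
  have hss : s ^ 2 * s⁻¹ ^ 2 = 1 := by field_simp
  have h2 := mul_le_mul_of_nonneg_left hfinal (by positivity : (0:ℝ) ≤ s ^ 2)
  have lhs_eq : s ^ 2 * (↑n * (s⁻¹ ^ 2 * σseq n ^ 2 * L)) = σseq n ^ 2 * L * ↑n * (s ^ 2 * s⁻¹ ^ 2) := by ring
  have rhs_eq : s ^ 2 * (c * (2 * γ n)) = 2 * σ ^ 2 * γ n * (s ^ 2 * s⁻¹ ^ 2) := by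
    rw [hc_def]; ring
  rw [lhs_eq, rhs_eq, hss, mul_one, mul_one] at h2
  exact h2
end

section
/- Let F : Finset S → ℝ be a monotone submodular set function with F(∅) = 0 on a finite ground set S. Let G_n be the value achieved after n steps of the greedy algorithm that at each step adds the element with maximal marginal gain. Then (1 - 1/e)·max_{|Z|=n} F(Z) ≤ G_n ≤ max_{|Z|=n} F(Z). -/
open Finset

/-- Telescoping bound from submodularity: the gain of adding a whole set is at
most the sum of individual marginal gains. -/
lemma marginal_sum_aux {S : Type*} [DecidableEq S] (F : Finset S → ℝ)
    (hmono : ∀ A B : Finset S, A ⊆ B → F A ≤ F B)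
    (hsubmod : ∀ (A B : Finset S) (x : S), A ⊆ B → x ∉ B →
      F (insert x B) - F B ≤ F (insert x A) - F A) :
    ∀ (T A : Finset S), F (A ∪ T) ≤ F A + ∑ x ∈ T, (F (insert x A) - F A) := by
  intro T
  induction T using Finset.induction_on with
  | empty => intro A; simp
  | @insert x T hx ih =>
    intro A
    have h0 : A ∪ insert x T = insert x (A ∪ T) := by
      ext y; simp [or_comm, or_left_comm, or_assoc]
    have h1 : F (insert x (A ∪ T)) - F (A ∪ T) ≤ F (insert x A) - F A := by
      by_cases hxAT : x ∈ A ∪ T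
      · rw [Finset.insert_eq_self.2 hxAT]
        have := hmono A (insert x A) (Finset.subset_insert x A)
        linarith
      · exact hsubmod A (A ∪ T) x Finset.subset_union_left hxAT
    have h2 := ih A
    rw [h0, Finset.sum_insert hx]
    linarith

/-- Nemhauser–Wolsey–Fisher: for a monotone submodular `F` with `F ∅ = 0` on a
finite ground set, the greedy algorithm after `n` steps achieves at least a
`(1 - 1/e)` fraction of the best value over sets of cardinality `n`, and of
course no more than that best value. -/
theorem greedy_submodular_guarantee {S : Type*} [Fintype S] [DecidableEq S]
    (F : Finset S → ℝ)
    (hmono : ∀ A B : Finset S, A ⊆ B → F A ≤ F B)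
    (hsubmod : ∀ (A B : Finset S) (x : S), A ⊆ B → x ∉ B →
      F (insert x B) - F B ≤ F (insert x A) - F A)
    (hempty : F ∅ = 0)
    (G : ℕ → Finset S) (hG0 : G 0 = ∅)
    (hgreedy : ∀ n : ℕ, (G n).card < Fintype.card S →
      ∃ x : S, x ∉ G n ∧ G (n + 1) = insert x (G n) ∧
        ∀ y : S, F (insert y (G n)) ≤ F (insert x (G n))) :
    ∀ n : ℕ, n ≤ Fintype.card S →
      ((∀ Z : Finset S, Z.card = n → (1 - 1 / Real.exp 1) * F Z ≤ F (G n)) ∧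
       (∃ Z : Finset S, Z.card = n ∧ F (G n) ≤ F Z)) := by
  intro n hn
  have hFnn : ∀ A : Finset S, 0 ≤ F A := by
    intro A
    have := hmono ∅ A (Finset.empty_subset A)
    linarith [hempty ▸ this]
  -- cardinality of greedy sets
  have hcard : ∀ k, k ≤ n → (G k).card = k := by
    intro k
    induction k with
    | zero => intro _; simp [hG0]
    | succ m ih =>
      intro hk
      have hm := ih (by omega)
      obtain ⟨x, hx, hGx, _⟩ := hgreedy m (by rw [hm]; omega)
      rw [hGx, Finset.card_insert_of_notMem hx, hm]
  constructor
  · intro Z hZ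
    rcases Nat.eq_zero_or_pos n with hn0 | hnpos
    · subst hn0
      have hZe : Z = ∅ := Finset.card_eq_zero.mp hZ
      rw [hZe, hempty, hG0, hempty]
      simp
    -- main induction
    have hnR : (0:ℝ) < (n:ℝ) := by exact_mod_cast hnpos
    have h1n : (0:ℝ) ≤ 1 - 1/(n:ℝ) := by
      rw [sub_nonneg, div_le_one hnR]
      exact_mod_cast hnpos
    have key : ∀ k, k ≤ n → F Z - F (G k) ≤ (1 - 1/(n:ℝ))^k * F Z := by
      intro k
      induction k with
      | zero => intro _; rw [hG0, hempty]; simp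
      | succ m ih =>
        intro hk
        have ihm := ih (by omega)
        have hm := hcard m (by omega)
        obtain ⟨x, hx, hGx, hmax⟩ := hgreedy m (by rw [hm]; omega)
        -- F Z ≤ F (G m) + n * (F (G (m+1)) - F (G m))
        have hZbound : F Z ≤ F (G m) + (n:ℝ) * (F (G (m+1)) - F (G m)) := by
          have h1 : F Z ≤ F (G m ∪ Z) := hmono _ _ Finset.subset_union_right
          have h2 := marginal_sum_aux F hmono hsubmod Z (G m)
          have h3 : ∑ z ∈ Z, (F (insert z (G m)) - F (G m)) ≤
              (n:ℝ) * (F (G (m+1)) - F (G m)) := by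
            have h4 : ∀ z ∈ Z, F (insert z (G m)) - F (G m) ≤
                F (G (m+1)) - F (G m) := by
              intro z _
              rw [hGx]
              linarith [hmax z]
            calc ∑ z ∈ Z, (F (insert z (G m)) - F (G m))
                ≤ ∑ _z ∈ Z, (F (G (m+1)) - F (G m)) := Finset.sum_le_sum h4
              _ = (n:ℝ) * (F (G (m+1)) - F (G m)) := by
                  rw [Finset.sum_const, hZ, nsmul_eq_mul]
          linarith
        -- contraction step
        have hstep : F Z - F (G (m+1)) ≤ (1 - 1/(n:ℝ)) * (F Z - F (G m)) := by
          rw [show (1 - 1/(n:ℝ)) = ((n:ℝ)-1)/n by field_simp]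
          rw [div_mul_eq_mul_div, le_div_iff₀ hnR]
          nlinarith [hZbound]
        calc F Z - F (G (m+1)) ≤ (1 - 1/(n:ℝ)) * (F Z - F (G m)) := hstep
          _ ≤ (1 - 1/(n:ℝ)) * ((1 - 1/(n:ℝ))^m * F Z) :=
              mul_le_mul_of_nonneg_left ihm h1n
          _ = (1 - 1/(n:ℝ))^(m+1) * F Z := by ring
    have hfinal := key n le_rfl
    -- (1 - 1/n)^n ≤ 1 / exp 1
    have hexp : (1 - 1/(n:ℝ))^n ≤ 1 / Real.exp 1 := by
      have h1 : (1 - 1/(n:ℝ)) ≤ Real.exp (-(1/(n:ℝ))) := by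
        have := Real.add_one_le_exp (-(1/(n:ℝ)))
        linarith
      have h2 : (1 - 1/(n:ℝ))^n ≤ (Real.exp (-(1/(n:ℝ))))^n :=
        pow_le_pow_left₀ h1n h1 n
      have h3 : (Real.exp (-(1/(n:ℝ))))^n = Real.exp (-1) := by
        rw [← Real.exp_nat_mul]
        congr 1
        field_simp
      rw [h3, Real.exp_neg, ← one_div] at h2
      exact h2
    have hZnn := hFnn Z
    have : (1 - 1/(n:ℝ))^n * F Z ≤ (1 / Real.exp 1) * F Z :=
      mul_le_mul_of_nonneg_right hexp hZnn
    linarith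
  · exact ⟨G n, hcard n le_rfl, le_refl _⟩
end
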